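/- Let P be a partition of a finite set U and M_P the partition-circuit matroid induced by P. Then for all X ⊆ U, the closure satisfies cl(X) = X ∪ {x ∈ Xᶜ : f̲(X ∪ {x}) = f̲(X) + 1}. -/

import Mathlib

open Finset

/-- Rank function of the partition-circuit matroid induced by `P`. -/
def pcRank {U : Type*} [DecidableEq U] (P : Finset (Finset U)) (X : Finset U) : ℕ :=
  (X.powerset.filter (fun I => ∀ B ∈ P, ¬ B ⊆ I)).sup Finset.card

/-- Closure operator of the partition-circuit matroid induced by `P`. -/
def pcCl {U : Type*} [Fintype U] [DecidableEq U] (P : Finset (Finset U)) (X : Finset U) :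
    Finset U :=
  Finset.univ.filter (fun u => pcRank P (insert u X) = pcRank P X)

lemma exists_transversal {U : Type*} [DecidableEq U] (P : Finset (Finset U))
    (hne : ∀ B ∈ P, B.Nonempty)
    (hdisj : ∀ B ∈ P, ∀ B' ∈ P, B ≠ B' → Disjoint B B')
    (X : Finset U) :
    ∃ S : Finset U, S ⊆ X ∧ S.card = (P.filter (fun B => B ⊆ X)).card ∧
      ∀ B ∈ P, ¬ B ⊆ X \ S := by
  classical
  set Q := P.filter (fun B => B ⊆ X) with hQ
  choose f hf using fun (B : {B // B ∈ Q}) => hne B.1 (Finset.mem_filter.mp B.2).1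
  have hinj : Function.Injective f := by
    intro B B' h
    have h1 := hf B; have h2 := hf B'
    rw [h] at h1
    by_contra hne'
    have hd := hdisj B'.1 (Finset.mem_filter.mp B'.2).1 B.1 (Finset.mem_filter.mp B.2).1
      (fun e => hne' (Subtype.ext e.symm))
    exact (Finset.disjoint_left.mp hd h2) h1
  refine ⟨Q.attach.image f, ?_, ?_, ?_⟩
  · intro x hx
    obtain ⟨B, _, rfl⟩ := Finset.mem_image.mp hx
    exact (Finset.mem_filter.mp B.2).2 (hf B)
  · rw [Finset.card_image_of_injective _ hinj, Finset.card_attach]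
  · intro B hB hsub
    have hBX : B ⊆ X := fun x hx => (Finset.mem_sdiff.mp (hsub hx)).1
    have hBQ : B ∈ Q := Finset.mem_filter.mpr ⟨hB, hBX⟩
    have hmem : f ⟨B, hBQ⟩ ∈ Q.attach.image f :=
      Finset.mem_image_of_mem f (Finset.mem_attach _ _)
    exact (Finset.mem_sdiff.mp (hsub (hf ⟨B, hBQ⟩))).2 hmem

lemma pcRank_eq {U : Type*} [DecidableEq U] (P : Finset (Finset U))
    (hne : ∀ B ∈ P, B.Nonempty)
    (hdisj : ∀ B ∈ P, ∀ B' ∈ P, B ≠ B' → Disjoint B B')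
    (X : Finset U) :
    pcRank P X = X.card - (P.filter (fun B => B ⊆ X)).card := by
  classical
  set Q := P.filter (fun B => B ⊆ X) with hQ
  obtain ⟨S, hSX, hScard, hSind⟩ := exists_transversal P hne hdisj X
  apply le_antisymm
  · -- every independent subset of X has card ≤ |X| - |Q|
    apply Finset.sup_le
    intro I hI
    rw [Finset.mem_filter, Finset.mem_powerset] at hI
    obtain ⟨hIX, hind⟩ := hI
    -- pick for each B ∈ Q an element of B \ I
    choose g hg1 hg2 using fun (B : {B // B ∈ Q}) =>
      Finset.not_subset.mp (hind B.1 (Finset.mem_filter.mp B.2).1)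
    have hinj : Function.Injective g := by
      intro B B' h
      have h1 := hg1 B; have h2 := hg1 B'
      rw [h] at h1
      by_contra hne'
      have hd := hdisj B'.1 (Finset.mem_filter.mp B'.2).1 B.1 (Finset.mem_filter.mp B.2).1
        (fun e => hne' (Subtype.ext e.symm))
      exact (Finset.disjoint_left.mp hd h2) h1
    have hsub : Q.attach.image g ⊆ X \ I := by
      intro x hx
      obtain ⟨B, _, rfl⟩ := Finset.mem_image.mp hx
      exact Finset.mem_sdiff.mpr ⟨(Finset.mem_filter.mp B.2).2 (hg1 B), hg2 B⟩
    have hcard := Finset.card_le_card hsub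
    rw [Finset.card_image_of_injective _ hinj, Finset.card_attach,
      Finset.card_sdiff_of_subset hIX] at hcard
    have hIXc : I.card ≤ X.card := Finset.card_le_card hIX
    omega
  · -- X \ S is independent of the right size
    have hmem : X \ S ∈ X.powerset.filter (fun I => ∀ B ∈ P, ¬ B ⊆ I) := by
      rw [Finset.mem_filter, Finset.mem_powerset]
      exact ⟨Finset.sdiff_subset, hSind⟩
    have := Finset.le_sup (f := Finset.card) hmem
    rwa [Finset.card_sdiff_of_subset hSX, hScard] at this

lemma filter_card_le {U : Type*} [DecidableEq U] (P : Finset (Finset U))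
    (hne : ∀ B ∈ P, B.Nonempty)
    (hdisj : ∀ B ∈ P, ∀ B' ∈ P, B ≠ B' → Disjoint B B')
    (X : Finset U) :
    (P.filter (fun B => B ⊆ X)).card ≤ X.card := by
  obtain ⟨S, hSX, hScard, _⟩ := exists_transversal P hne hdisj X
  rw [← hScard]; exact Finset.card_le_card hSX

theorem stmt_12 {U : Type*} [Fintype U] [DecidableEq U]
    (P : Finset (Finset U))
    (hne : ∀ B ∈ P, B.Nonempty)
    (hdisj : ∀ B ∈ P, ∀ B' ∈ P, B ≠ B' → Disjoint B B')
    (hcov : P.biUnion id = Finset.univ)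
    (X : Finset U) :
    pcCl P X = X ∪ (Xᶜ.filter (fun x =>
      (P.filter (fun B => B ⊆ insert x X)).card = (P.filter (fun B => B ⊆ X)).card + 1)) := by
  classical
  ext u
  simp only [pcCl, Finset.mem_filter, Finset.mem_univ, true_and, Finset.mem_union,
    Finset.mem_compl]
  by_cases hu : u ∈ X
  · simp [hu, Finset.insert_eq_self.mpr hu]
  · rw [pcRank_eq P hne hdisj, pcRank_eq P hne hdisj,
      Finset.card_insert_of_notMem hu]
    have hle : (P.filter (fun B => B ⊆ X)).card ≤ X.card := filter_card_le P hne hdisj X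
    have hmono : (P.filter (fun B => B ⊆ X)).card ≤ (P.filter (fun B => B ⊆ insert u X)).card :=
      Finset.card_le_card (Finset.monotone_filter_right _
        (fun B _ hB => hB.trans (Finset.subset_insert u X)) )
    have hstep : (P.filter (fun B => B ⊆ insert u X)).card ≤
        (P.filter (fun B => B ⊆ X)).card + 1 := by
      -- blocks in insert u X either ⊆ X or contain u; at most one contains u
      have hsub : P.filter (fun B => B ⊆ insert u X) ⊆
          P.filter (fun B => B ⊆ X) ∪ P.filter (fun B => B ⊆ insert u X ∧ u ∈ B) := by
        intro B hB
        rw [Finset.mem_filter] at hB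
        by_cases hub : u ∈ B
        · exact Finset.mem_union_right _ (Finset.mem_filter.mpr ⟨hB.1, hB.2, hub⟩)
        · refine Finset.mem_union_left _ (Finset.mem_filter.mpr ⟨hB.1, fun x hx => ?_⟩)
          rcases Finset.mem_insert.mp (hB.2 hx) with h | h
          · exact absurd (h ▸ hx) hub
          · exact h
      have hone : (P.filter (fun B => B ⊆ insert u X ∧ u ∈ B)).card ≤ 1 := by
        apply Finset.card_le_one.mpr
        intro B hB B' hB'
        rw [Finset.mem_filter] at hB hB'
        by_contra hBB'
        exact (Finset.disjoint_left.mp (hdisj B hB.1 B' hB'.1 hBB') hB.2.2) hB'.2.2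
      calc (P.filter (fun B => B ⊆ insert u X)).card
          ≤ _ := Finset.card_le_card hsub
        _ ≤ _ + _ := Finset.card_union_le _ _
        _ ≤ (P.filter (fun B => B ⊆ X)).card + 1 := by omega
    constructor
    · intro h; exact Or.inr ⟨hu, by omega⟩
    · rintro (h | ⟨_, h⟩)
      · exact absurd h hu
      · omega
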